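/- There is no type Z together with an equivalence (bijection) Z ≃ ((Z → Z) ⊕ Z). Consequently, for the family of endofunctors of Type given by 𝔉(V, W) = (X ↦ (V → X) ⊕ W), there is no endofunctor B of Type admitting a terminal B-coalgebra with carrier Z together with a natural isomorphism between B and the functor X ↦ (Z → X) ⊕ Z (i.e. the higher-order fixed-point equation B ≅ 𝔉(|νB|, |νB|) has no solution in Type). -/

import Mathlib

open CategoryTheory Limits

universe u

/-- The endofunctor of `Type` given by `X ↦ (V → X) ⊕ W`. -/
def inputOutputFunctor (V W : Type u) : Type u ⥤ Type u where
  obj X := (V → X) ⊕ W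
  map f := TypeCat.ofHom fun x =>
    match x with
    | Sum.inl φ => Sum.inl (f ∘ φ)
    | Sum.inr w => Sum.inr w
  map_id := by intro X; ext x; cases x <;> rfl
  map_comp := by intros X Y Z f g; ext x; cases x <;> rfl

/-- Part 1: no type `Z` satisfies `Z ≃ ((Z → Z) ⊕ Z)`. -/
lemma no_fixed_type (Z : Type u) : IsEmpty (Z ≃ ((Z → Z) ⊕ Z)) := by
  constructor
  intro e
  classical
  by_cases hnt : Nontrivial Z
  · obtain ⟨a, b, hab⟩ := hnt
    have hinj : Function.Injective (fun S : Set Z => e.symm (Sum.inl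
        (fun z => if z ∈ S then a else b))) := by
      intro S T h
      have h' := e.symm.injective h
      have h'' : (fun z => if z ∈ S then a else b) = (fun z => if z ∈ T then a else b) :=
        Sum.inl.inj h'
      ext z
      have hz := congrFun h'' z
      constructor <;> intro h
      · by_contra hT
        rw [if_pos h, if_neg hT] at hz
        exact hab hz
      · by_contra hS
        rw [if_neg hS, if_pos h] at hz
        exact hab hz.symm
    exact Function.cantor_injective _ hinj
  · have hsub : Subsingleton Z := not_nontrivial_iff_subsingleton.mp hnt
    have h1 : e.symm (Sum.inl id) = e.symm (Sum.inr (e.symm (Sum.inl id))) :=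
      Subsingleton.elim _ _
    have := e.symm.injective h1
    cases this

/-- Lambek's lemma for terminal coalgebras: the structure map is an iso. -/
lemma lambek {C : Type*} [Category C] {F : C ⥤ C} (A : Endofunctor.Coalgebra F)
    (h : IsTerminal A) : IsIso A.str := by
  let W : Endofunctor.Coalgebra F := ⟨F.obj A.V, F.map A.str⟩
  let g := h.from W
  have hg := g.h
  -- hg : F.map A.str ≫ F.map g.f = g.f ≫ A.str
  have key : A.str ≫ g.f = 𝟙 A.V := by
    have : (⟨A.str ≫ g.f, by
        dsimp [W] at hg ⊢
        rw [F.map_comp, ← Category.assoc, Category.assoc, hg]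
        simp⟩ : A ⟶ A) = 𝟙 A :=
      h.hom_ext _ _
    exact congrArg Endofunctor.Coalgebra.Hom.f this
  refine ⟨g.f, key, ?_⟩
  calc g.f ≫ A.str = F.map A.str ≫ F.map g.f := hg.symm
    _ = F.map (A.str ≫ g.f) := (F.map_comp _ _).symm
    _ = 𝟙 _ := by rw [key, F.map_id]

theorem no_higher_order_solution_in_Type :
    (∀ Z : Type u, IsEmpty (Z ≃ ((Z → Z) ⊕ Z))) ∧
    (∀ (B : Type u ⥤ Type u) (CB : Endofunctor.Coalgebra B),
        Nonempty (IsTerminal CB) →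
        Nonempty (B ≅ inputOutputFunctor CB.V CB.V) → False) := by
  refine ⟨no_fixed_type, ?_⟩
  intro B CB ⟨hT⟩ ⟨i⟩
  have : IsIso CB.str := lambek CB hT
  have e1 : CB.V ≅ B.obj CB.V := asIso CB.str
  have e2 : B.obj CB.V ≅ (inputOutputFunctor CB.V CB.V).obj CB.V := i.app CB.V
  have e : CB.V ≃ ((CB.V → CB.V) ⊕ CB.V) := (e1 ≪≫ e2).toEquiv
  exact (no_fixed_type CB.V).false e
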